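/- Let A be an n×d real matrix of rank ρ with truncated SVD A_k = U_kΣ_kV_kᵀ and residual A_{ρ−k} = A − A_k, let k < min{n,d}, ε ∈ (0,1/3), γ ≥ 1, and let R be any d×t real matrix. Let X_opt minimize ‖A − XXᵀA‖_F² over all n×k indicator matrices X. Suppose: (a) V_kᵀR has rank k and ‖(V_kᵀR)⁺‖₂ ≤ 1/(1−ε); (b) ‖A_k − AR(V_kᵀR)⁺V_kᵀ‖_F ≤ 4ε‖A − A_k‖_F; (c) ‖(I − X_optX_optᵀ)AR‖_F ≤ √(1+ε)·‖(I − X_optX_optᵀ)A‖_F. Then every n×k indicator matrix X̃ satisfying ‖(I − X̃X̃ᵀ)AR‖_F² ≤ γ‖(I − X_optX_optᵀ)AR‖_F² also satisfies ‖A − X̃X̃ᵀA‖_F² ≤ (1 + (1+28ε)γ)·‖A − X_optX_optᵀA‖_F². -/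

import Mathlib

open MeasureTheory
open scoped Matrix

/-- Frobenius norm of a real matrix. -/
noncomputable def frobNorm {m n : ℕ} (M : Matrix (Fin m) (Fin n) ℝ) : ℝ :=
  Real.sqrt (∑ i, ∑ j, (M i j) ^ 2)

/-- Spectral (operator) norm of a real matrix, viewed as a linear map between
Euclidean spaces. -/
noncomputable def specNorm {m n : ℕ} (M : Matrix (Fin m) (Fin n) ℝ) : ℝ :=
  ‖LinearMap.toContinuousLinearMap (Matrix.toEuclideanLin M)‖

/-- `P` is the Moore–Penrose pseudoinverse of `M` (the four Penrose conditions;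
such a `P` is unique). -/
def IsMoorePenrose {m n : ℕ} (M : Matrix (Fin m) (Fin n) ℝ)
    (P : Matrix (Fin n) (Fin m) ℝ) : Prop :=
  M * P * M = M ∧ P * M * P = P ∧ (M * P)ᵀ = M * P ∧ (P * M)ᵀ = P * M

/-- `X` is an `n × k` cluster indicator matrix: each row `i` has a single nonzero
entry, in column `f i`, equal to `1/√(z_{f i})` where `z_j` is the number of rows
assigned to column `j`. -/
def IsIndicator {n k : ℕ} (X : Matrix (Fin n) (Fin k) ℝ) : Prop :=
  ∃ f : Fin n → Fin k, ∀ i j, X i j =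
    if f i = j then 1 / Real.sqrt ((Finset.univ.filter fun i' => f i' = j).card) else 0

/-- The singular values of a `k × t` real matrix `M` (in some order): the square
roots of the eigenvalues of `M * Mᵀ`. -/
noncomputable def singVals {k t : ℕ} (M : Matrix (Fin k) (Fin t) ℝ) (i : Fin k) : ℝ :=
  Real.sqrt ((Matrix.isHermitian_mul_conjTranspose_self M).eigenvalues i)

/-- The `d × t` random sign matrix with entries `±1/√t`, as a function of the
sample point `ω` (a `d × t` array of fair coins). -/
noncomputable def signMatrix (d t : ℕ) (ω : Fin d → Fin t → Bool) :
    Matrix (Fin d) (Fin t) ℝ :=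
  Matrix.of fun i j => (if ω i j then (1 : ℝ) else -1) / Real.sqrt t

/-- The law of a `d × t` matrix of i.i.d. fair signs: the uniform probability
measure on all `d × t` sign patterns. -/
noncomputable def signMeasure (d t : ℕ) : Measure (Fin d → Fin t → Bool) :=
  (PMF.uniformOfFintype (Fin d → Fin t → Bool)).toMeasure

namespace Aux

noncomputable def toE {m n : ℕ} (M : Matrix (Fin m) (Fin n) ℝ) :
    EuclideanSpace ℝ (Fin m × Fin n) :=
  (WithLp.equiv 2 _).symm (fun p => M p.1 p.2)

lemma toE_add {m n : ℕ} (M N : Matrix (Fin m) (Fin n) ℝ) :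
    toE (M + N) = toE M + toE N := rfl

lemma frob_eq {m n : ℕ} (M : Matrix (Fin m) (Fin n) ℝ) : frobNorm M = ‖toE M‖ := by
  rw [EuclideanSpace.norm_eq, frobNorm]
  congr 1
  rw [Fintype.sum_prod_type]
  exact Finset.sum_congr rfl fun i _ => Finset.sum_congr rfl fun j _ => by
    simp [toE, Real.norm_eq_abs, sq_abs]

lemma frobNorm_nonneg {m n : ℕ} (M : Matrix (Fin m) (Fin n) ℝ) : 0 ≤ frobNorm M :=
  Real.sqrt_nonneg _

lemma frob_sq {m n : ℕ} (M : Matrix (Fin m) (Fin n) ℝ) :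
    frobNorm M ^ 2 = ∑ i, ∑ j, (M i j) ^ 2 := by
  rw [frobNorm, Real.sq_sqrt]
  positivity

lemma le_of_sq {a b : ℝ} (ha : 0 ≤ a) (hb : 0 ≤ b) (h : a ^ 2 ≤ b ^ 2) : a ≤ b := by
  nlinarith

lemma frob_eq_of_sq {m n m' n' : ℕ} (M : Matrix (Fin m) (Fin n) ℝ)
    (N : Matrix (Fin m') (Fin n') ℝ) (h : frobNorm M ^ 2 = frobNorm N ^ 2) :
    frobNorm M = frobNorm N :=
  le_antisymm (le_of_sq (frobNorm_nonneg M) (frobNorm_nonneg N) h.le)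
    (le_of_sq (frobNorm_nonneg N) (frobNorm_nonneg M) h.ge)

lemma inner_toE {m n : ℕ} (M N : Matrix (Fin m) (Fin n) ℝ) :
    inner ℝ (toE M) (toE N) = (Mᵀ * N).trace := by
  rw [Matrix.trace]
  simp only [PiLp.inner_apply, RCLike.inner_apply, conj_trivial, Matrix.diag_apply,
    Matrix.mul_apply, Matrix.transpose_apply]
  rw [Fintype.sum_prod_type, Finset.sum_comm]
  exact Finset.sum_congr rfl fun _ _ => Finset.sum_congr rfl fun _ _ => mul_comm _ _

lemma frob_sq_trace {m n : ℕ} (M : Matrix (Fin m) (Fin n) ℝ) :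
    frobNorm M ^ 2 = (Mᵀ * M).trace := by
  rw [← inner_toE, frob_eq, ← real_inner_self_eq_norm_sq]

lemma frob_pythagoras {m n : ℕ} (M N : Matrix (Fin m) (Fin n) ℝ)
    (h : (Mᵀ * N).trace = 0) :
    frobNorm (M + N) ^ 2 = frobNorm M ^ 2 + frobNorm N ^ 2 := by
  rw [frob_eq, frob_eq, frob_eq, toE_add, norm_add_sq_real, ← inner_toE] at *
  rw [h]; ring

lemma frob_triangle {m n : ℕ} (M N : Matrix (Fin m) (Fin n) ℝ) :
    frobNorm (M + N) ≤ frobNorm M + frobNorm N := by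
  rw [frob_eq, frob_eq, frob_eq, toE_add]; exact norm_add_le _ _

end Aux

namespace Aux

section Proj
variable {m n q : ℕ} (P : Matrix (Fin m) (Fin m) ℝ)

lemma proj_split (hsym : Pᵀ = P) (hidem : P * P = P) (M : Matrix (Fin m) (Fin n) ℝ) :
    frobNorm (P * M) ^ 2 + frobNorm ((1 - P) * M) ^ 2 = frobNorm M ^ 2 := by
  have hsum : P * M + (1 - P) * M = M := by
    rw [Matrix.sub_mul, Matrix.one_mul]; abel
  have horth : ((P * M)ᵀ * ((1 - P) * M)).trace = 0 := by
    have : (P * M)ᵀ * ((1 - P) * M) = Mᵀ * ((Pᵀ * (1 - P)) * M) := by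
      rw [Matrix.transpose_mul]; simp only [Matrix.mul_assoc]
    rw [this, hsym, Matrix.mul_sub, Matrix.mul_one, hidem, sub_self, Matrix.zero_mul,
      Matrix.mul_zero, Matrix.trace_zero]
  rw [← frob_pythagoras _ _ horth, hsum]

lemma proj_contract (hsym : Pᵀ = P) (hidem : P * P = P) (M : Matrix (Fin m) (Fin n) ℝ) :
    frobNorm ((1 - P) * M) ≤ frobNorm M := by
  have h := proj_split P hsym hidem M
  have h1 := frobNorm_nonneg (P * M)
  have h2 := frobNorm_nonneg ((1 - P) * M)
  have h3 := frobNorm_nonneg M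
  nlinarith

end Proj

section Orth

lemma frob_mul_orthright {a b c : ℕ} (N : Matrix (Fin a) (Fin b) ℝ)
    (V : Matrix (Fin c) (Fin b) ℝ) (hV : Vᵀ * V = 1) :
    frobNorm (N * Vᵀ) = frobNorm N := by
  apply frob_eq_of_sq
  rw [frob_sq_trace, frob_sq_trace, Matrix.transpose_mul, Matrix.transpose_transpose]
  have : V * Nᵀ * (N * Vᵀ) = V * ((Nᵀ * N) * Vᵀ) := by simp only [Matrix.mul_assoc]
  rw [this, Matrix.trace_mul_comm, Matrix.mul_assoc, hV, Matrix.mul_one]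

lemma frob_mul_orthleft {a b c : ℕ} (N : Matrix (Fin a) (Fin b) ℝ)
    (U : Matrix (Fin c) (Fin a) ℝ) (hU : Uᵀ * U = 1) :
    frobNorm (U * N) = frobNorm N := by
  apply frob_eq_of_sq
  rw [frob_sq_trace, frob_sq_trace, Matrix.transpose_mul]
  have : Nᵀ * Uᵀ * (U * N) = Nᵀ * ((Uᵀ * U) * N) := by simp only [Matrix.mul_assoc]
  rw [this, hU, Matrix.one_mul]

end Orth

section Spec

noncomputable def vE {b : ℕ} (v : Fin b → ℝ) : EuclideanSpace ℝ (Fin b) :=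
  (WithLp.equiv 2 _).symm v

lemma vE_sq {b : ℕ} (v : Fin b → ℝ) : ‖vE v‖ ^ 2 = ∑ j, v j ^ 2 := by
  rw [EuclideanSpace.norm_eq, Real.sq_sqrt (by positivity)]
  exact Finset.sum_congr rfl fun j _ => by simp [vE, Real.norm_eq_abs, sq_abs]

lemma specNorm_nonneg {a b : ℕ} (M : Matrix (Fin a) (Fin b) ℝ) : 0 ≤ specNorm M :=
  norm_nonneg _

lemma mulVec_spec_le {a b : ℕ} (M : Matrix (Fin a) (Fin b) ℝ) (x : Fin b → ℝ) :
    ‖vE (M *ᵥ x)‖ ≤ specNorm M * ‖vE x‖ := by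
  have := (LinearMap.toContinuousLinearMap (Matrix.toEuclideanLin M)).le_opNorm (vE x)
  simpa [specNorm, vE, Matrix.toEuclideanLin_apply] using this

lemma mulVec_transpose_spec_le {a b : ℕ} (M : Matrix (Fin a) (Fin b) ℝ) (v : Fin a → ℝ) :
    ‖vE (Mᵀ *ᵥ v)‖ ≤ specNorm M * ‖vE v‖ := by
  set w := Mᵀ *ᵥ v with hw
  have key : ‖vE w‖ ^ 2 ≤ (specNorm M * ‖vE v‖) * ‖vE w‖ := by
    have h1 : ‖vE w‖ ^ 2 = v ⬝ᵥ (M *ᵥ w) := by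
      rw [vE_sq]
      rw [Matrix.dotProduct_mulVec, ← Matrix.mulVec_transpose]
      simp [dotProduct, hw, pow_two]
    have h2 : v ⬝ᵥ (M *ᵥ w) = inner ℝ (vE v) (vE (M *ᵥ w)) := by
      simp [vE, PiLp.inner_apply, RCLike.inner_apply, conj_trivial, dotProduct, mul_comm]
    have h3 : inner ℝ (vE v) (vE (M *ᵥ w)) ≤ ‖vE v‖ * ‖vE (M *ᵥ w)‖ :=
      real_inner_le_norm _ _
    have h4 := mulVec_spec_le M w
    have h5 : ‖vE v‖ * ‖vE (M *ᵥ w)‖ ≤ ‖vE v‖ * (specNorm M * ‖vE w‖) :=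
      mul_le_mul_of_nonneg_left h4 (norm_nonneg _)
    calc ‖vE w‖ ^ 2 = v ⬝ᵥ (M *ᵥ w) := h1
      _ ≤ ‖vE v‖ * ‖vE (M *ᵥ w)‖ := h2 ▸ h3
      _ ≤ ‖vE v‖ * (specNorm M * ‖vE w‖) := h5
      _ = (specNorm M * ‖vE v‖) * ‖vE w‖ := by ring
  rcases eq_or_lt_of_le (norm_nonneg (vE w)) with h | h
  · rw [← h]; exact mul_nonneg (specNorm_nonneg M) (norm_nonneg _)
  · have := le_of_mul_le_mul_right (by nlinarith [key] : ‖vE w‖ * ‖vE w‖ ≤ (specNorm M * ‖vE v‖) * ‖vE w‖) h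
    exact this

lemma frob_mul_spec {a b c : ℕ} (M : Matrix (Fin a) (Fin b) ℝ)
    (Q : Matrix (Fin b) (Fin c) ℝ) :
    frobNorm (M * Q) ≤ frobNorm M * specNorm Q := by
  apply le_of_sq (frobNorm_nonneg _) (mul_nonneg (frobNorm_nonneg _) (specNorm_nonneg _))
  rw [frob_sq, mul_pow, frob_sq]
  have hrow : ∀ i, ∑ j, (M * Q) i j ^ 2 ≤ specNorm Q ^ 2 * ∑ l, M i l ^ 2 := by
    intro i
    have h1 : ∑ j, (M * Q) i j ^ 2 = ‖vE (Qᵀ *ᵥ (M i))‖ ^ 2 := by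
      rw [vE_sq]
      exact Finset.sum_congr rfl fun j _ => by
        simp [Matrix.mul_apply, Matrix.mulVec, dotProduct, mul_comm]
    have h2 := mulVec_transpose_spec_le Q (M i)
    have h3 : ‖vE (Qᵀ *ᵥ (M i))‖ ^ 2 ≤ (specNorm Q * ‖vE (M i)‖) ^ 2 := by
      have := norm_nonneg (vE (Qᵀ *ᵥ (M i)))
      nlinarith
    rw [h1]
    calc ‖vE (Qᵀ *ᵥ (M i))‖ ^ 2 ≤ (specNorm Q * ‖vE (M i)‖) ^ 2 := h3
      _ = specNorm Q ^ 2 * ∑ l, M i l ^ 2 := by rw [mul_pow, vE_sq]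
  calc ∑ i, ∑ j, (M * Q) i j ^ 2 ≤ ∑ i, specNorm Q ^ 2 * ∑ l, M i l ^ 2 :=
        Finset.sum_le_sum fun i _ => hrow i
    _ = specNorm Q ^ 2 * ∑ i, ∑ l, M i l ^ 2 := by rw [← Finset.mul_sum]
    _ = _ := mul_comm _ _

end Spec

end Aux

namespace Aux

lemma indicator_gram {n k : ℕ} {X : Matrix (Fin n) (Fin k) ℝ} (hX : IsIndicator X) :
    ∃ δ : Fin k → ℝ, (∀ j, δ j = 0 ∨ δ j = 1) ∧ Xᵀ * X = Matrix.diagonal δ := by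
  obtain ⟨f, hf⟩ := hX
  set z : Fin k → ℕ := fun j => (Finset.univ.filter fun i' => f i' = j).card with hz
  refine ⟨fun j => if z j = 0 then 0 else 1, fun j => by dsimp only; split_ifs <;> simp, ?_⟩
  ext j j'
  rw [Matrix.mul_apply, Matrix.diagonal_apply]
  by_cases hjj : j = j'
  · subst hjj
    simp only [if_pos rfl]
    have : ∀ i, Xᵀ j i * X i j = if f i = j then (1 : ℝ) / z j else 0 := by
      intro i
      rw [Matrix.transpose_apply, hf i j]
      split_ifs with h
      · rw [div_mul_div_comm, one_mul, Real.mul_self_sqrt (Nat.cast_nonneg _)]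
      · ring
    rw [Finset.sum_congr rfl fun i _ => this i, ← Finset.sum_filter, Finset.sum_const,
      nsmul_eq_mul, if_pos trivial]
    have hcard : (Finset.filter (fun a => f a = j) Finset.univ).card = z j := rfl
    rw [hcard]
    split_ifs with h
    · simp [h]
    · rw [mul_one_div, div_self (Nat.cast_ne_zero.mpr h)]
  · rw [if_neg hjj]
    apply Finset.sum_eq_zero
    intro i _
    rw [Matrix.transpose_apply, hf i j, hf i j']
    split_ifs with h1 h2
    · exact absurd (h1 ▸ h2) hjj
    · ring
    · ring
    · ring

end Aux

namespace Aux

lemma indicator_proj {n k : ℕ} {X : Matrix (Fin n) (Fin k) ℝ} (hX : IsIndicator X) :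
    (X * Xᵀ)ᵀ = X * Xᵀ ∧ (X * Xᵀ) * (X * Xᵀ) = X * Xᵀ ∧ (X * Xᵀ).trace ≤ (k : ℝ) := by
  obtain ⟨δ, hδ01, hgram⟩ := indicator_gram hX
  have hcol : ∀ j, δ j = 0 → ∀ i, X i j = 0 := by
    intro j h0 i
    have hdiag : (Xᵀ * X) j j = ∑ i, X i j ^ 2 := by
      rw [Matrix.mul_apply]
      exact Finset.sum_congr rfl fun i _ => by rw [Matrix.transpose_apply, pow_two]
    rw [hgram, Matrix.diagonal_apply_eq, h0] at hdiag
    have hsq : ∑ i, X i j ^ 2 = 0 := hdiag.symm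
    have := (Finset.sum_eq_zero_iff_of_nonneg (fun i _ => sq_nonneg (X i j))).mp hsq i
      (Finset.mem_univ i)
    nlinarith [this, sq_nonneg (X i j), sq_abs (X i j)]
  have hXgram : X * (Xᵀ * X) = X := by
    rw [hgram]
    ext i j
    rw [Matrix.mul_diagonal]
    rcases hδ01 j with h | h
    · rw [h, mul_zero, hcol j h i]
    · rw [h, mul_one]
  refine ⟨by rw [Matrix.transpose_mul, Matrix.transpose_transpose], ?_, ?_⟩
  · calc (X * Xᵀ) * (X * Xᵀ) = (X * (Xᵀ * X)) * Xᵀ := by simp only [Matrix.mul_assoc]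
      _ = X * Xᵀ := by rw [hXgram]
  · rw [Matrix.trace_mul_comm, hgram, Matrix.trace_diagonal]
    calc ∑ j, δ j ≤ ∑ _j : Fin k, (1 : ℝ) :=
          Finset.sum_le_sum fun j _ => by rcases hδ01 j with h | h <;> simp [h]
      _ = k := by simp

end Aux

namespace Aux

lemma scalar_ineq (ε γ B a b q : ℝ) (hε0 : 0 < ε) (hε : ε < 1 / 3) (hγ : 1 ≤ γ)
    (hB : 0 ≤ B) (ha0 : 0 ≤ a) (hb0 : 0 ≤ b)
    (hq : q ≤ 1 / (1 - ε)) (hq0 : 0 ≤ q)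
    (ha : a ≤ Real.sqrt (1 + ε) * Real.sqrt γ * B * q + 4 * ε * B) (hbB : b ≤ B) :
    a ^ 2 + b ^ 2 ≤ (1 + (1 + 28 * ε) * γ) * B ^ 2 := by
  set s := Real.sqrt (1 + ε) with hs
  set g := Real.sqrt γ with hg
  have hc : (0 : ℝ) < 1 - ε := by linarith
  have hs2 : s ^ 2 = 1 + ε := Real.sq_sqrt (by linarith)
  have hg2 : g ^ 2 = γ := Real.sq_sqrt (by linarith)
  have hs0 : 0 ≤ s := Real.sqrt_nonneg _
  have hg1 : 1 ≤ g := by nlinarith [Real.sqrt_nonneg γ]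
  have hs1 : s ≤ 1 + ε / 2 := by nlinarith
  -- a ≤ s*g*B/(1-ε) + 4εB
  have ha2 : a ≤ s * g * B / (1 - ε) + 4 * ε * B := by
    have : s * g * B * q ≤ s * g * B * (1 / (1 - ε)) :=
      mul_le_mul_of_nonneg_left hq (by positivity)
    calc a ≤ s * g * B * q + 4 * ε * B := ha
      _ ≤ s * g * B * (1 / (1 - ε)) + 4 * ε * B := by linarith
      _ = s * g * B / (1 - ε) + 4 * ε * B := by ring
  have key : (s * g / (1 - ε) + 4 * ε) ^ 2 ≤ (1 + 28 * ε) * γ := by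
    rw [div_add' _ _ _ (ne_of_gt hc), div_pow, div_le_iff₀ (by positivity)]
    have hε4 : (0:ℝ) ≤ 4 * ε * (1 - ε) := by nlinarith
    have h1 : s * g + 4 * ε * (1 - ε) ≤ g * (s + 4 * ε * (1 - ε)) := by
      nlinarith [mul_nonneg (sub_nonneg.mpr hg1) hε4]
    have h2 : (s + 4 * ε * (1 - ε)) ^ 2 ≤ (1 + 28 * ε) * (1 - ε) ^ 2 := by
      nlinarith [mul_pos hε0 hc, sq_nonneg (1/3 - ε), mul_pos (mul_pos hε0 hε0) hε0,
        mul_nonneg (mul_nonneg hε0.le hε0.le) (by linarith : (0:ℝ) ≤ 1/3 - ε),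
        mul_nonneg hε0.le (sq_nonneg (1/3 - ε)), sq_nonneg (s - 1), sq_nonneg (s - 1 - ε/2),
        mul_nonneg hε0.le hs0]
    have h3 : 0 ≤ s + 4 * ε * (1 - ε) := by positivity
    have h0 : 0 ≤ s * g + 4 * ε * (1 - ε) :=
      add_nonneg (mul_nonneg hs0 (by linarith)) hε4
    calc (s * g + 4 * ε * (1 - ε)) ^ 2 ≤ (g * (s + 4 * ε * (1 - ε))) ^ 2 :=
        pow_le_pow_left₀ h0 h1 2
      _ = g ^ 2 * (s + 4 * ε * (1 - ε)) ^ 2 := by ring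
      _ ≤ g ^ 2 * ((1 + 28 * ε) * (1 - ε) ^ 2) :=
        mul_le_mul_of_nonneg_left h2 (sq_nonneg g)
      _ = (1 + 28 * ε) * γ * (1 - ε) ^ 2 := by rw [hg2]; ring
  have ha3 : a ^ 2 ≤ (1 + 28 * ε) * γ * B ^ 2 := by
    have hrhs : s * g * B / (1 - ε) + 4 * ε * B = (s * g / (1 - ε) + 4 * ε) * B := by ring
    rw [hrhs] at ha2
    have h0 : 0 ≤ s * g / (1 - ε) + 4 * ε := by positivity
    calc a ^ 2 ≤ ((s * g / (1 - ε) + 4 * ε) * B) ^ 2 := pow_le_pow_left₀ ha0 ha2 2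
      _ = (s * g / (1 - ε) + 4 * ε) ^ 2 * B ^ 2 := by ring
      _ ≤ (1 + 28 * ε) * γ * B ^ 2 :=
        mul_le_mul_of_nonneg_right key (sq_nonneg B)
  have hb2 : b ^ 2 ≤ B ^ 2 := pow_le_pow_left₀ hb0 hbB 2
  have hexp : (1 + (1 + 28 * ε) * γ) * B ^ 2 = B ^ 2 + (1 + 28 * ε) * γ * B ^ 2 := by ring
  linarith

end Aux

namespace Aux

lemma sum_fin_eq_left {n : ℕ} (g : Fin n → ℝ) (jv : ℕ) :
    ∑ l : Fin n, (if (l : ℕ) = jv then g l else 0) =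
      if h : jv < n then g ⟨jv, h⟩ else 0 := by
  by_cases h : jv < n
  · rw [dif_pos h, Finset.sum_eq_single ⟨jv, h⟩]
    · rw [if_pos rfl]
    · intro b _ hb
      exact if_neg (fun he => hb (Fin.ext he))
    · intro hmem; exact absurd (Finset.mem_univ _) hmem
  · rw [dif_neg h]
    apply Finset.sum_eq_zero
    intro l _
    exact if_neg (fun he => h (lt_of_eq_of_lt he.symm l.isLt))

lemma sum_fin_eq_right {d : ℕ} (g : Fin d → ℝ) (iv : ℕ) :
    ∑ j : Fin d, (if iv = (j : ℕ) then g j else 0) =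
      if h : iv < d then g ⟨iv, h⟩ else 0 := by
  rw [← sum_fin_eq_left g iv]
  exact Finset.sum_congr rfl fun j _ => if_congr eq_comm rfl rfl

lemma sum_const_lt {n k : ℕ} (hkn : k ≤ n) (x : ℝ) :
    ∑ l : Fin n, (if (l : ℕ) < k then x else 0) = k * x := by
  rw [Fin.sum_univ_eq_sum_range (fun iv => if iv < k then x else 0) n]
  rw [← Finset.sum_subset (Finset.range_subset_range.mpr hkn)
    (fun i _ hi => if_neg (by simpa using hi))]
  rw [Finset.sum_congr rfl (fun i hi => if_pos (Finset.mem_range.mp hi)),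
    Finset.sum_const, Finset.card_range, nsmul_eq_mul]

lemma weight_sum_le {n k : ℕ} (hkn : k < n) (σ : ℕ → ℝ)
    (hmono : ∀ i j : ℕ, i ≤ j → σ j ≤ σ i) (hnneg : ∀ i, 0 ≤ σ i)
    (c : Fin n → ℝ) (hc0 : ∀ l, 0 ≤ c l) (hc1 : ∀ l, c l ≤ 1)
    (hsum : ∑ l, c l ≤ (k : ℝ)) :
    ∑ l : Fin n, σ (l : ℕ) ^ 2 * c l ≤
      ∑ l : Fin n, (if (l : ℕ) < k then σ (l : ℕ) ^ 2 else 0) := by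
  have hterm : ∀ l : Fin n, σ (l : ℕ) ^ 2 * c l ≤
      (if (l : ℕ) < k then σ (l : ℕ) ^ 2 - σ k ^ 2 else 0) + σ k ^ 2 * c l := by
    intro l
    by_cases h : (l : ℕ) < k
    · rw [if_pos h]
      have h1 : σ k ≤ σ l := hmono _ _ (le_of_lt h)
      have h2 : σ k ^ 2 ≤ σ (l : ℕ) ^ 2 := by nlinarith [hnneg k, hnneg (l : ℕ)]
      nlinarith [hc0 l, hc1 l]
    · rw [if_neg h]
      have h1 : σ (l : ℕ) ≤ σ k := hmono _ _ (le_of_not_gt h)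
      have h2 : σ (l : ℕ) ^ 2 ≤ σ k ^ 2 := by nlinarith [hnneg k, hnneg (l : ℕ)]
      nlinarith [hc0 l]
  have hsplit : ∑ l : Fin n, (if (l : ℕ) < k then σ (l : ℕ) ^ 2 - σ k ^ 2 else 0) =
      (∑ l : Fin n, (if (l : ℕ) < k then σ (l : ℕ) ^ 2 else 0)) - k * σ k ^ 2 := by
    rw [← sum_const_lt (le_of_lt hkn) (σ k ^ 2), ← Finset.sum_sub_distrib]
    exact Finset.sum_congr rfl fun l _ => by split_ifs <;> ring
  calc ∑ l : Fin n, σ (l : ℕ) ^ 2 * c l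
      ≤ ∑ l : Fin n, ((if (l : ℕ) < k then σ (l : ℕ) ^ 2 - σ k ^ 2 else 0) + σ k ^ 2 * c l) :=
        Finset.sum_le_sum fun l _ => hterm l
    _ = (∑ l : Fin n, (if (l : ℕ) < k then σ (l : ℕ) ^ 2 - σ k ^ 2 else 0))
          + σ k ^ 2 * ∑ l, c l := by rw [Finset.sum_add_distrib, Finset.mul_sum]
    _ ≤ (∑ l : Fin n, (if (l : ℕ) < k then σ (l : ℕ) ^ 2 - σ k ^ 2 else 0))
          + σ k ^ 2 * k := by
        have := mul_le_mul_of_nonneg_left hsum (sq_nonneg (σ k))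
        linarith
    _ = ∑ l : Fin n, (if (l : ℕ) < k then σ (l : ℕ) ^ 2 else 0) := by
        rw [hsplit]; ring

end Aux



namespace Aux

section SVD

variable {n d k ρ : ℕ} (σ : ℕ → ℝ)

lemma frob_sigma_sq (p : ℕ → Prop) [DecidablePred p] :
    frobNorm (Matrix.of fun (i : Fin n) (j : Fin d) =>
        if (i : ℕ) = (j : ℕ) ∧ p (i : ℕ) then σ (i : ℕ) else 0) ^ 2
      = ∑ i : Fin n, (if (i : ℕ) < d ∧ p (i : ℕ) then σ (i : ℕ) ^ 2 else 0) := by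
  rw [frob_sq]
  apply Finset.sum_congr rfl
  intro i _
  by_cases hp : p (i : ℕ)
  · have hterm : ∀ j : Fin d, (Matrix.of fun (i : Fin n) (j : Fin d) =>
        if (i : ℕ) = (j : ℕ) ∧ p (i : ℕ) then σ (i : ℕ) else 0) i j ^ 2
        = if (i : ℕ) = (j : ℕ) then σ (i : ℕ) ^ 2 else 0 := by
      intro j
      rw [Matrix.of_apply]
      by_cases h : (i : ℕ) = (j : ℕ)
      · rw [if_pos ⟨h, hp⟩, if_pos h]
      · rw [if_neg (fun hh => h hh.1), if_neg h, zero_pow two_ne_zero]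
    rw [Finset.sum_congr rfl fun j _ => hterm j,
      sum_fin_eq_right (fun _ => σ (i : ℕ) ^ 2) (i : ℕ)]
    by_cases h : (i : ℕ) < d
    · rw [dif_pos h, if_pos ⟨h, hp⟩]
    · rw [dif_neg h, if_neg (fun hh => h hh.1)]
  · rw [if_neg (fun hh => hp hh.2)]
    apply Finset.sum_eq_zero
    intro j _
    rw [Matrix.of_apply, if_neg (fun hh => hp hh.2), zero_pow two_ne_zero]

lemma proj_mul_le (hkn : k < n)
    (hnneg : ∀ i, 0 ≤ σ i) (hmono : ∀ i j : ℕ, i ≤ j → σ j ≤ σ i)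
    (U : Matrix (Fin n) (Fin n) ℝ) (W : Matrix (Fin d) (Fin d) ℝ)
    (hU : Uᵀ * U = 1) (hUU : U * Uᵀ = 1) (hW : Wᵀ * W = 1)
    (A : Matrix (Fin n) (Fin d) ℝ)
    (hA : A = U * (Matrix.of fun (i : Fin n) (j : Fin d) =>
      if (i : ℕ) = (j : ℕ) then σ (i : ℕ) else 0) * Wᵀ)
    (P : Matrix (Fin n) (Fin n) ℝ) (hsym : Pᵀ = P) (hidem : P * P = P)
    (htr : P.trace ≤ (k : ℝ)) :
    frobNorm (P * A) ^ 2 ≤ ∑ l : Fin n, (if (l : ℕ) < k then σ (l : ℕ) ^ 2 else 0) := by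
  set Sf : Matrix (Fin n) (Fin d) ℝ := Matrix.of fun (i : Fin n) (j : Fin d) =>
    if (i : ℕ) = (j : ℕ) then σ (i : ℕ) else 0 with hSf
  set M : Matrix (Fin n) (Fin n) ℝ := P * U with hM
  set c : Fin n → ℝ := fun l => ∑ i, M i l ^ 2 with hc
  have hc0 : ∀ l, 0 ≤ c l := fun l => Finset.sum_nonneg fun i _ => sq_nonneg _
  -- diagonal entries
  have hdiag : ∀ (Q : Matrix (Fin n) (Fin n) ℝ) (l : Fin n),
      (Qᵀ * Q) l l = ∑ i, Q i l ^ 2 := by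
    intro Q l
    rw [Matrix.mul_apply]
    exact Finset.sum_congr rfl fun i _ => by rw [Matrix.transpose_apply, pow_two]
  have e1 : Pᵀ * P = P := by rw [hsym, hidem]
  have e2 : (1 - P)ᵀ * (1 - P) = 1 - P := by
    rw [Matrix.transpose_sub, Matrix.transpose_one, hsym, Matrix.sub_mul,
      Matrix.one_mul, Matrix.mul_sub, Matrix.mul_one, hidem, sub_self, sub_zero]
  have hsplitU : Mᵀ * M + ((1 - P) * U)ᵀ * ((1 - P) * U) = 1 := by
    rw [hM, Matrix.transpose_mul, Matrix.transpose_mul, Matrix.mul_assoc,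
      Matrix.mul_assoc, ← Matrix.mul_assoc Pᵀ, e1, ← Matrix.mul_assoc (1 - P)ᵀ, e2,
      ← Matrix.mul_add, ← Matrix.add_mul]
    have : P + (1 - P) = 1 := by abel
    rw [this, Matrix.one_mul, hU]
  have hc1 : ∀ l, c l ≤ 1 := by
    intro l
    have h1 := congrFun (congrFun hsplitU l) l
    rw [Matrix.add_apply, hdiag M l, hdiag ((1 - P) * U) l, Matrix.one_apply_eq] at h1
    have h2 : 0 ≤ ∑ i, ((1 - P) * U) i l ^ 2 := Finset.sum_nonneg fun i _ => sq_nonneg _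
    rw [hc]; linarith
  have hcsum : ∑ l, c l = P.trace := by
    have h1 : ∑ l, c l = (Mᵀ * M).trace := by
      rw [Matrix.trace]
      exact Finset.sum_congr rfl fun l _ => (hdiag M l).symm
    rw [h1, hM, Matrix.transpose_mul, Matrix.mul_assoc, ← Matrix.mul_assoc Pᵀ, e1,
      Matrix.trace_mul_comm, Matrix.mul_assoc, hUU, Matrix.mul_one]
  -- frobNorm (P * A) = frobNorm (M * Sf)
  have hPA : P * A = (M * Sf) * Wᵀ := by
    rw [hA, hM]; simp only [Matrix.mul_assoc]
  have hfr : frobNorm (P * A) = frobNorm (M * Sf) := by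
    rw [hPA]; exact frob_mul_orthright _ W hW
  -- entries of M * Sf
  have hentry : ∀ (i : Fin n) (j : Fin d), (M * Sf) i j =
      if h : (j : ℕ) < n then M i ⟨(j : ℕ), h⟩ * σ (j : ℕ) else 0 := by
    intro i j
    rw [Matrix.mul_apply]
    have : ∀ l : Fin n, M i l * Sf l j =
        if (l : ℕ) = (j : ℕ) then M i l * σ (l : ℕ) else 0 := by
      intro l
      rw [hSf, Matrix.of_apply, mul_ite, mul_zero]
    rw [Finset.sum_congr rfl fun l _ => this l,
      sum_fin_eq_left (fun l => M i l * σ (l : ℕ)) (j : ℕ)]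
  have hfr2 : frobNorm (M * Sf) ^ 2 =
      ∑ j : Fin d, (if h : (j : ℕ) < n then σ (j : ℕ) ^ 2 * c ⟨(j : ℕ), h⟩ else 0) := by
    rw [frob_sq, Finset.sum_comm]
    apply Finset.sum_congr rfl
    intro j _
    by_cases h : (j : ℕ) < n
    · rw [dif_pos h]
      have : ∀ i : Fin n, (M * Sf) i j ^ 2 = M i ⟨(j : ℕ), h⟩ ^ 2 * σ (j : ℕ) ^ 2 := by
        intro i; rw [hentry i j, dif_pos h]; ring
      rw [Finset.sum_congr rfl fun i _ => this i, ← Finset.sum_mul, hc]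
      ring
    · rw [dif_neg h]
      apply Finset.sum_eq_zero
      intro i _
      rw [hentry i j, dif_neg h, zero_pow two_ne_zero]
  -- compare the Fin d indexed sum with the Fin n indexed sum
  set F : ℕ → ℝ := fun jv => if h : jv < n then σ jv ^ 2 * c ⟨jv, h⟩ else 0 with hF
  have hF0 : ∀ jv, 0 ≤ F jv := by
    intro jv; simp only [hF]
    split_ifs with h
    · exact mul_nonneg (sq_nonneg _) (hc0 _)
    · exact le_refl 0
  have hstep : ∑ j : Fin d, (if h : (j : ℕ) < n then σ (j : ℕ) ^ 2 * c ⟨(j : ℕ), h⟩ else 0)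
      ≤ ∑ l : Fin n, σ (l : ℕ) ^ 2 * c l := by
    have h1 : ∑ j : Fin d, (if h : (j : ℕ) < n then σ (j : ℕ) ^ 2 * c ⟨(j : ℕ), h⟩ else 0)
        = ∑ jv ∈ Finset.range d, F jv := Fin.sum_univ_eq_sum_range F d
    have h2 : ∑ jv ∈ Finset.range d, F jv ≤ ∑ jv ∈ Finset.range (max d n), F jv :=
      Finset.sum_le_sum_of_subset_of_nonneg
        (Finset.range_subset_range.mpr (le_max_left d n)) (fun i _ _ => hF0 i)
    have h3 : ∑ jv ∈ Finset.range (max d n), F jv = ∑ jv ∈ Finset.range n, F jv :=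
      (Finset.sum_subset (Finset.range_subset_range.mpr (le_max_right d n))
        (fun i _ hi => dif_neg (by simpa using hi))).symm
    have h4 : ∑ jv ∈ Finset.range n, F jv = ∑ l : Fin n, σ (l : ℕ) ^ 2 * c l := by
      rw [← Fin.sum_univ_eq_sum_range F n]
      refine Finset.sum_congr rfl fun l _ => ?_
      simp only [hF]
      rw [dif_pos l.isLt]
    rw [h1, ← h4, ← h3]
    exact h2
  have hws := weight_sum_le hkn σ hmono hnneg c hc0 hc1 (hcsum ▸ htr)
  calc frobNorm (P * A) ^ 2 = frobNorm (M * Sf) ^ 2 := by rw [hfr]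
    _ = _ := hfr2
    _ ≤ ∑ l : Fin n, σ (l : ℕ) ^ 2 * c l := hstep
    _ ≤ _ := hws

end SVD

end Aux

namespace Aux

section Main

variable {n d k : ℕ} (σ : ℕ → ℝ)

lemma residual_eq (hA : ∀ (A Ak : Matrix (Fin n) (Fin d) ℝ)
    (U : Matrix (Fin n) (Fin n) ℝ) (W : Matrix (Fin d) (Fin d) ℝ), True) : True := trivial

end Main

section Main2

variable {n d k : ℕ} (σ : ℕ → ℝ) (U : Matrix (Fin n) (Fin n) ℝ)
  (W : Matrix (Fin d) (Fin d) ℝ)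

-- the residual A - Ak as an explicit SVD-form matrix
lemma sub_svd (A Ak : Matrix (Fin n) (Fin d) ℝ)
    (hA : A = U * (Matrix.of fun (i : Fin n) (j : Fin d) =>
      if (i : ℕ) = (j : ℕ) then σ (i : ℕ) else 0) * Wᵀ)
    (hAk : Ak = U * (Matrix.of fun (i : Fin n) (j : Fin d) =>
      if (i : ℕ) = (j : ℕ) ∧ (i : ℕ) < k then σ (i : ℕ) else 0) * Wᵀ) :
    A - Ak = U * (Matrix.of fun (i : Fin n) (j : Fin d) =>
      if (i : ℕ) = (j : ℕ) ∧ ¬ (i : ℕ) < k then σ (i : ℕ) else 0) * Wᵀ := by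
  rw [hA, hAk, ← Matrix.sub_mul, ← Matrix.mul_sub]
  congr 1
  congr 1
  ext i j
  simp only [Matrix.sub_apply, Matrix.of_apply]
  by_cases h : (i : ℕ) = (j : ℕ)
  · by_cases h2 : (j : ℕ) < k
    · simp [h, h2]
    · simp [h, h2]
  · simp [h]

lemma residual_orth (A Ak : Matrix (Fin n) (Fin d) ℝ) (hW : Wᵀ * W = 1)
    (hA : A = U * (Matrix.of fun (i : Fin n) (j : Fin d) =>
      if (i : ℕ) = (j : ℕ) then σ (i : ℕ) else 0) * Wᵀ)
    (hAk : Ak = U * (Matrix.of fun (i : Fin n) (j : Fin d) =>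
      if (i : ℕ) = (j : ℕ) ∧ (i : ℕ) < k then σ (i : ℕ) else 0) * Wᵀ) :
    (A - Ak) * Akᵀ = 0 := by
  rw [sub_svd σ U W A Ak hA hAk, hAk]
  set S2 : Matrix (Fin n) (Fin d) ℝ := Matrix.of fun (i : Fin n) (j : Fin d) =>
    if (i : ℕ) = (j : ℕ) ∧ ¬ (i : ℕ) < k then σ (i : ℕ) else 0 with hS2
  set Sk : Matrix (Fin n) (Fin d) ℝ := Matrix.of fun (i : Fin n) (j : Fin d) =>
    if (i : ℕ) = (j : ℕ) ∧ (i : ℕ) < k then σ (i : ℕ) else 0 with hSk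
  have hzero : S2 * Skᵀ = 0 := by
    ext i i'
    rw [Matrix.mul_apply, Matrix.zero_apply]
    apply Finset.sum_eq_zero
    intro j _
    rw [hS2, hSk, Matrix.of_apply, Matrix.transpose_apply, Matrix.of_apply]
    rcases Decidable.em ((i : ℕ) = (j : ℕ) ∧ ¬ (i : ℕ) < k) with h1 | h1
    · rw [if_pos h1]
      rcases Decidable.em ((i' : ℕ) = (j : ℕ) ∧ (i' : ℕ) < k) with h2 | h2
      · exfalso
        obtain ⟨e1, l1⟩ := h1
        obtain ⟨e2, l2⟩ := h2
        omega
      · rw [if_neg h2, mul_zero]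
    · rw [if_neg h1, zero_mul]
  have expand : (U * S2 * Wᵀ) * (U * Sk * Wᵀ)ᵀ = U * (S2 * ((Wᵀ * W) * (Skᵀ * Uᵀ))) := by
    rw [Matrix.transpose_mul, Matrix.transpose_mul, Matrix.transpose_transpose]
    simp only [Matrix.mul_assoc]
  rw [expand, hW, Matrix.one_mul, ← Matrix.mul_assoc S2, hzero, Matrix.zero_mul,
    Matrix.mul_zero]

lemma pyth_split (A Ak : Matrix (Fin n) (Fin d) ℝ)
    (horth : (A - Ak) * Akᵀ = 0)
    (P : Matrix (Fin n) (Fin n) ℝ) (hsym : Pᵀ = P) (hidem : P * P = P) :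
    frobNorm ((1 - P) * A) ^ 2 =
      frobNorm ((1 - P) * Ak) ^ 2 + frobNorm ((1 - P) * (A - Ak)) ^ 2 := by
  have e2 : (1 - P)ᵀ * (1 - P) = 1 - P := by
    rw [Matrix.transpose_sub, Matrix.transpose_one, hsym, Matrix.sub_mul,
      Matrix.one_mul, Matrix.mul_sub, Matrix.mul_one, hidem, sub_self, sub_zero]
  have hsum : (1 - P) * Ak + (1 - P) * (A - Ak) = (1 - P) * A := by
    rw [← Matrix.mul_add]
    congr 1
    abel
  have htr : (((1 - P) * Ak)ᵀ * ((1 - P) * (A - Ak))).trace = 0 := by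
    have h1 : ((1 - P) * Ak)ᵀ * ((1 - P) * (A - Ak)) =
        Akᵀ * ((1 - P) * (A - Ak)) := by
      rw [Matrix.transpose_mul, Matrix.mul_assoc, ← Matrix.mul_assoc (1 - P)ᵀ, e2]
    rw [h1, Matrix.trace_mul_comm, Matrix.mul_assoc, Matrix.trace_mul_comm, horth,
      Matrix.zero_mul, Matrix.trace_zero]
  rw [← hsum, frob_pythagoras _ _ htr]

lemma ey_main (hkn : k < n) (hkd : k < d)
    (hnneg : ∀ i, 0 ≤ σ i) (hmono : ∀ i j : ℕ, i ≤ j → σ j ≤ σ i)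
    (hU : Uᵀ * U = 1) (hUU : U * Uᵀ = 1) (hW : Wᵀ * W = 1)
    (A Ak : Matrix (Fin n) (Fin d) ℝ)
    (hA : A = U * (Matrix.of fun (i : Fin n) (j : Fin d) =>
      if (i : ℕ) = (j : ℕ) then σ (i : ℕ) else 0) * Wᵀ)
    (hAk : Ak = U * (Matrix.of fun (i : Fin n) (j : Fin d) =>
      if (i : ℕ) = (j : ℕ) ∧ (i : ℕ) < k then σ (i : ℕ) else 0) * Wᵀ)
    (P : Matrix (Fin n) (Fin n) ℝ) (hsym : Pᵀ = P) (hidem : P * P = P)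
    (htr : P.trace ≤ (k : ℝ)) :
    frobNorm (A - Ak) ^ 2 ≤ frobNorm ((1 - P) * A) ^ 2 := by
  set K : ℝ := ∑ l : Fin n, (if (l : ℕ) < k then σ (l : ℕ) ^ 2 else 0) with hK
  have h1 : frobNorm (P * A) ^ 2 ≤ K :=
    proj_mul_le σ hkn hnneg hmono U W hU hUU hW A hA P hsym hidem htr
  have h2 : frobNorm (P * A) ^ 2 + frobNorm ((1 - P) * A) ^ 2 = frobNorm A ^ 2 :=
    proj_split P hsym hidem A
  -- frobNorm A ^ 2 = frobNorm (A - Ak) ^ 2 + K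
  have hAfr : frobNorm A ^ 2 = ∑ i : Fin n,
      (if (i : ℕ) < d ∧ True then σ (i : ℕ) ^ 2 else 0) := by
    have : A = U * (Matrix.of fun (i : Fin n) (j : Fin d) =>
        if (i : ℕ) = (j : ℕ) ∧ (fun _ : ℕ => True) (i : ℕ) then σ (i : ℕ) else 0) * Wᵀ := by
      rw [hA]; congr 1; congr 1; ext i j; simp
    rw [this, frob_mul_orthright _ W hW, frob_mul_orthleft _ U hU,
      frob_sigma_sq σ (fun _ => True)]
  have hResfr : frobNorm (A - Ak) ^ 2 = ∑ i : Fin n,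
      (if (i : ℕ) < d ∧ ¬ (i : ℕ) < k then σ (i : ℕ) ^ 2 else 0) := by
    rw [sub_svd σ U W A Ak hA hAk, frob_mul_orthright _ W hW, frob_mul_orthleft _ U hU,
      frob_sigma_sq σ (fun iv => ¬ iv < k)]
  have hsumeq : frobNorm A ^ 2 = frobNorm (A - Ak) ^ 2 + K := by
    rw [hAfr, hResfr, hK, ← Finset.sum_add_distrib]
    apply Finset.sum_congr rfl
    intro i _
    rcases Decidable.em ((i : ℕ) < k) with h1 | h1
    · have hd : (i : ℕ) < d := lt_trans h1 hkd
      rw [if_pos h1, if_pos (⟨hd, trivial⟩ : (i : ℕ) < d ∧ True),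
        if_neg (fun hh : (i : ℕ) < d ∧ ¬ (i : ℕ) < k => hh.2 h1)]
      ring
    · rw [if_neg h1]
      by_cases h2 : (i : ℕ) < d
      · rw [if_pos (⟨h2, trivial⟩ : (i : ℕ) < d ∧ True),
          if_pos (⟨h2, h1⟩ : (i : ℕ) < d ∧ ¬ (i : ℕ) < k)]
        ring
      · rw [if_neg (fun hh : (i : ℕ) < d ∧ True => h2 hh.1),
          if_neg (fun hh : (i : ℕ) < d ∧ ¬ (i : ℕ) < k => h2 hh.1)]
        ring
  linarith

end Main2

end Aux

namespace Aux

lemma submatrix_orth {d k : ℕ} (W : Matrix (Fin d) (Fin d) ℝ) (hW : Wᵀ * W = 1)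
    (h : k ≤ d) :
    (W.submatrix id (Fin.castLE h))ᵀ * (W.submatrix id (Fin.castLE h)) = 1 := by
  ext j j'
  rw [Matrix.mul_apply, Matrix.one_apply]
  have hw := congrFun (congrFun hW (Fin.castLE h j)) (Fin.castLE h j')
  rw [Matrix.mul_apply, Matrix.one_apply] at hw
  have heq : ∑ l, (W.submatrix id (Fin.castLE h))ᵀ j l * (W.submatrix id (Fin.castLE h)) l j'
      = ∑ l, Wᵀ (Fin.castLE h j) l * W l (Fin.castLE h j') := by
    apply Finset.sum_congr rfl
    intro l _
    simp [Matrix.submatrix_apply]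
  rw [heq, hw]
  exact if_congr (Fin.castLE_inj) rfl rfl

lemma le_sqrt_mul {x y γ : ℝ} (hx : 0 ≤ x) (hy : 0 ≤ y) (hγ : 0 ≤ γ)
    (h : x ^ 2 ≤ γ * y ^ 2) : x ≤ Real.sqrt γ * y :=
  le_of_sq hx (mul_nonneg (Real.sqrt_nonneg _) hy)
    (by rw [mul_pow, Real.sq_sqrt hγ]; exact h)

end Aux

open Aux

/-- deterministic form of the main theorem. -/
theorem statement1 (n d k ρ t : ℕ) (hkn : k < n) (hkd : k < d) (hkρ : k < ρ)
    (hρn : ρ ≤ n) (hρd : ρ ≤ d)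
    (ε γ : ℝ) (hε0 : 0 < ε) (hε : ε < 1 / 3) (hγ : 1 ≤ γ)
    (A : Matrix (Fin n) (Fin d) ℝ)
    (U : Matrix (Fin n) (Fin n) ℝ) (W : Matrix (Fin d) (Fin d) ℝ) (σ : ℕ → ℝ)
    (hU : Uᵀ * U = 1) (hW : Wᵀ * W = 1)
    (hmono : ∀ i j : ℕ, i ≤ j → σ j ≤ σ i)
    (hpos : ∀ i : ℕ, i < ρ → 0 < σ i)
    (hzero : ∀ i : ℕ, ρ ≤ i → σ i = 0)
    (hA : A = U * (Matrix.of fun (i : Fin n) (j : Fin d) =>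
      if (i : ℕ) = (j : ℕ) then σ i else 0) * Wᵀ)
    (Ak : Matrix (Fin n) (Fin d) ℝ)
    (hAk : Ak = U * (Matrix.of fun (i : Fin n) (j : Fin d) =>
      if (i : ℕ) = (j : ℕ) ∧ (i : ℕ) < k then σ i else 0) * Wᵀ)
    (Vk : Matrix (Fin d) (Fin k) ℝ)
    (hVk : Vk = W.submatrix id (Fin.castLE (by omega)))
    (R : Matrix (Fin d) (Fin t) ℝ)
    (Xopt : Matrix (Fin n) (Fin k) ℝ) (hXopt : IsIndicator Xopt)
    (hXoptMin : ∀ X : Matrix (Fin n) (Fin k) ℝ, IsIndicator X →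
      frobNorm (A - Xopt * Xoptᵀ * A) ^ 2 ≤ frobNorm (A - X * Xᵀ * A) ^ 2)
    (P : Matrix (Fin t) (Fin k) ℝ) (hP : IsMoorePenrose (Vkᵀ * R) P)
    (ha1 : (Vkᵀ * R).rank = k)
    (ha2 : specNorm P ≤ 1 / (1 - ε))
    (hb : frobNorm (Ak - A * R * P * Vkᵀ) ≤ 4 * ε * frobNorm (A - Ak))
    (hc : frobNorm ((1 - Xopt * Xoptᵀ) * (A * R)) ≤
      Real.sqrt (1 + ε) * frobNorm ((1 - Xopt * Xoptᵀ) * A))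
    (Xt : Matrix (Fin n) (Fin k) ℝ) (hXt : IsIndicator Xt)
    (hXtγ : frobNorm ((1 - Xt * Xtᵀ) * (A * R)) ^ 2 ≤
      γ * frobNorm ((1 - Xopt * Xoptᵀ) * (A * R)) ^ 2) :
    frobNorm (A - Xt * Xtᵀ * A) ^ 2 ≤
      (1 + (1 + 28 * ε) * γ) * frobNorm (A - Xopt * Xoptᵀ * A) ^ 2 := by
  obtain ⟨hsymT, hidemT, htrT⟩ := indicator_proj hXt
  obtain ⟨hsymO, hidemO, htrO⟩ := indicator_proj hXopt
  have hUU : U * Uᵀ = 1 := mul_eq_one_comm.mp hU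
  have hnneg : ∀ i, 0 ≤ σ i := by
    intro i
    rcases lt_or_ge i ρ with h | h
    · exact (hpos i h).le
    · rw [hzero i h]
  have hrw : ∀ Q : Matrix (Fin n) (Fin n) ℝ, (1 - Q) * A = A - Q * A := fun Q => by
    rw [Matrix.sub_mul, Matrix.one_mul]
  rw [← hrw (Xt * Xtᵀ), ← hrw (Xopt * Xoptᵀ)]
  set B : ℝ := frobNorm ((1 - Xopt * Xoptᵀ) * A) with hB
  have hB0 : 0 ≤ B := frobNorm_nonneg _
  have hEY : frobNorm (A - Ak) ^ 2 ≤ B ^ 2 :=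
    ey_main σ U W hkn hkd hnneg hmono hU hUU hW A Ak hA hAk (Xopt * Xoptᵀ)
      hsymO hidemO htrO
  have hAkB : frobNorm (A - Ak) ≤ B := le_of_sq (frobNorm_nonneg _) hB0 hEY
  have hsplit : frobNorm ((1 - Xt * Xtᵀ) * A) ^ 2 =
      frobNorm ((1 - Xt * Xtᵀ) * Ak) ^ 2 +
        frobNorm ((1 - Xt * Xtᵀ) * (A - Ak)) ^ 2 :=
    pyth_split A Ak (residual_orth σ U W A Ak hW hA hAk) (Xt * Xtᵀ) hsymT hidemT
  have hb_le : frobNorm ((1 - Xt * Xtᵀ) * (A - Ak)) ≤ B :=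
    le_trans (proj_contract _ hsymT hidemT _) hAkB
  have hAkdecomp : (1 - Xt * Xtᵀ) * Ak =
      (1 - Xt * Xtᵀ) * (A * R * P * Vkᵀ) + (1 - Xt * Xtᵀ) * (Ak - A * R * P * Vkᵀ) := by
    rw [← Matrix.mul_add]
    congr 1
    abel
  have ha_tri : frobNorm ((1 - Xt * Xtᵀ) * Ak) ≤
      frobNorm ((1 - Xt * Xtᵀ) * (A * R * P * Vkᵀ)) +
        frobNorm ((1 - Xt * Xtᵀ) * (Ak - A * R * P * Vkᵀ)) := by
    rw [hAkdecomp]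
    exact frob_triangle _ _
  have hE : frobNorm ((1 - Xt * Xtᵀ) * (Ak - A * R * P * Vkᵀ)) ≤ 4 * ε * B := by
    calc frobNorm ((1 - Xt * Xtᵀ) * (Ak - A * R * P * Vkᵀ))
        ≤ frobNorm (Ak - A * R * P * Vkᵀ) := proj_contract _ hsymT hidemT _
      _ ≤ 4 * ε * frobNorm (A - Ak) := hb
      _ ≤ 4 * ε * B := mul_le_mul_of_nonneg_left hAkB (by positivity)
  have hVkV : Vkᵀ * Vk = 1 := by
    rw [hVk]
    exact submatrix_orth W hW _
  have hassoc : (1 - Xt * Xtᵀ) * (A * R * P * Vkᵀ) =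
      (((1 - Xt * Xtᵀ) * (A * R)) * P) * Vkᵀ := by
    simp only [Matrix.mul_assoc]
  have h5 : frobNorm ((1 - Xt * Xtᵀ) * (A * R * P * Vkᵀ)) =
      frobNorm (((1 - Xt * Xtᵀ) * (A * R)) * P) := by
    rw [hassoc]
    exact frob_mul_orthright _ Vk hVkV
  have h6 : frobNorm (((1 - Xt * Xtᵀ) * (A * R)) * P) ≤
      frobNorm ((1 - Xt * Xtᵀ) * (A * R)) * specNorm P := frob_mul_spec _ _
  have h7 : frobNorm ((1 - Xt * Xtᵀ) * (A * R)) ≤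
      Real.sqrt γ * frobNorm ((1 - Xopt * Xoptᵀ) * (A * R)) :=
    le_sqrt_mul (frobNorm_nonneg _) (frobNorm_nonneg _) (by linarith) hXtγ
  have h8 : frobNorm ((1 - Xt * Xtᵀ) * (A * R)) ≤
      Real.sqrt γ * (Real.sqrt (1 + ε) * B) :=
    le_trans h7 (mul_le_mul_of_nonneg_left hc (Real.sqrt_nonneg _))
  have ha_total : frobNorm ((1 - Xt * Xtᵀ) * Ak) ≤
      Real.sqrt (1 + ε) * Real.sqrt γ * B * specNorm P + 4 * ε * B := by
    have h9 : frobNorm (((1 - Xt * Xtᵀ) * (A * R))) * specNorm P ≤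
        (Real.sqrt γ * (Real.sqrt (1 + ε) * B)) * specNorm P :=
      mul_le_mul_of_nonneg_right h8 (specNorm_nonneg P)
    have h10 : (Real.sqrt γ * (Real.sqrt (1 + ε) * B)) * specNorm P =
        Real.sqrt (1 + ε) * Real.sqrt γ * B * specNorm P := by ring
    calc frobNorm ((1 - Xt * Xtᵀ) * Ak)
        ≤ frobNorm ((1 - Xt * Xtᵀ) * (A * R * P * Vkᵀ)) +
            frobNorm ((1 - Xt * Xtᵀ) * (Ak - A * R * P * Vkᵀ)) := ha_tri
      _ ≤ frobNorm ((1 - Xt * Xtᵀ) * (A * R)) * specNorm P + 4 * ε * B := by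
          rw [h5] at *
          linarith [h6, hE]
      _ ≤ Real.sqrt (1 + ε) * Real.sqrt γ * B * specNorm P + 4 * ε * B := by
          rw [← h10]
          linarith [h9]
  rw [hsplit]
  exact scalar_ineq ε γ B _ _ (specNorm P) hε0 hε hγ hB0 (frobNorm_nonneg _)
    (frobNorm_nonneg _) ha2 (specNorm_nonneg P) ha_total hb_le
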